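/- Marker-sequence deletion recovery: Let x = (0,1,...,t,0,1,...,t,0,1,...) ∈ Z_{t+1}^n be the periodic sequence with x_i = (i−1) mod (t+1). If y is obtained from x by deleting at most t components, then the set of deleted positions is uniquely determined by y; that is, if y can be obtained from x by deleting position-sets S and S' each of size at most t, then S = S'. -/

import Mathlib

lemma marker_aux (t n : ℕ) (S S' : Finset ℕ)
    (hS : S ⊆ Finset.range n)
    (hcS : S.card ≤ t)
    (h : ((List.range n).filter (fun i => i ∉ S)).map (fun i => i % (t + 1))
        = ((List.range n).filter (fun i => i ∉ S')).map (fun i => i % (t + 1)))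
    (m : ℕ) (hmS : m ∈ S) (hmS' : m ∉ S')
    (hmin : ∀ k, k < m → (k ∈ S ↔ k ∈ S')) : False := by
  have hmn : m < n := Finset.mem_range.mp (hS hmS)
  set B := List.range' m (n - m) with hB
  have hsplit : List.range n = List.range m ++ B := by
    rw [List.range_eq_range', hB]
    have := List.range'_append (s := 0) (m := m) (n := n - m) (step := 1)
    rw [List.range_eq_range']
    simpa [Nat.add_sub_cancel' hmn.le, Nat.add_comm] using this.symm
  have hpref : (List.range m).filter (fun i => i ∉ S)
      = (List.range m).filter (fun i => i ∉ S') := by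
    apply List.filter_congr
    intro x hx
    have hxm : x < m := List.mem_range.mp hx
    simp [hmin x hxm]
  rw [hsplit, List.filter_append, List.filter_append, List.map_append, List.map_append,
    hpref] at h
  have h2 := List.append_cancel_left h
  -- B = m :: rest
  have hBcons : B = m :: List.range' (m + 1) (n - m - 1) := by
    have h1 : B = List.range' m ((n - m - 1) + 1) := by rw [hB]; congr 1; omega
    rw [h1, List.range'_succ]
  have hRHS : B.filter (fun i => i ∉ S')
      = m :: (List.range' (m + 1) (n - m - 1)).filter (fun i => i ∉ S') := by
    rw [hBcons, List.filter_cons]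
    simp [hmS']
  rw [hRHS] at h2
  -- LHS filter nonempty
  cases hF : B.filter (fun i => i ∉ S) with
  | nil => rw [hF] at h2; simp at h2
  | cons j tl =>
    rw [hF] at h2
    simp only [List.map_cons, List.cons.injEq] at h2
    obtain ⟨hjm, _⟩ := h2
    have hjmem : j ∈ B.filter (fun i => i ∉ S) := by rw [hF]; exact List.mem_cons_self
    have hjB : j ∈ B := List.mem_of_mem_filter hjmem
    have hjS : j ∉ S := by
      have := List.of_mem_filter hjmem
      simpa using this
    have hjr := List.mem_range'_1.mp (hB ▸ hjB)
    have hjlow : m ≤ j := hjr.1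
    -- every k with m ≤ k < j is in S
    have hint : ∀ k, m ≤ k → k < j → k ∈ S := by
      intro k hk1 hk2
      by_contra hkS
      have hkB : k ∈ B := by
        rw [hB, List.mem_range'_1]
        constructor
        · exact hk1
        · omega
      have hkF : k ∈ B.filter (fun i => i ∉ S) := by
        apply List.mem_filter.mpr
        simpa using ⟨hkB, hkS⟩
      rw [hF] at hkF
      rcases List.mem_cons.mp hkF with rfl | hktl
      · omega
      · have hpw : (B.filter (fun i => i ∉ S)).Pairwise (· < ·) := by
          apply List.Pairwise.sublist (List.filter_sublist (l := B))
          rw [hB]; exact List.pairwise_lt_range' _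
        rw [hF] at hpw
        have := (List.pairwise_cons.mp hpw).1 k hktl
        omega
    have hjne : j ≠ m := fun e => hjS (e ▸ hmS)
    have hjgt : m < j := lt_of_le_of_ne hjlow (Ne.symm hjne)
    have hdvd : (t + 1) ∣ j - m := (Nat.modEq_iff_dvd' hjlow).mp hjm.symm
    have hjfar : m + (t + 1) ≤ j := by
      rcases hdvd with ⟨c, hc⟩
      rcases Nat.eq_zero_or_pos c with rfl | hc0
      · omega
      · have : t + 1 ≤ (t+1) * c := Nat.le_mul_of_pos_right _ hc0
        omega
    have hsub : Finset.Ico m (m + (t + 1)) ⊆ S := by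
      intro k hk
      rw [Finset.mem_Ico] at hk
      exact hint k hk.1 (by omega)
    have := Finset.card_le_card hsub
    rw [Nat.card_Ico] at this
    omega

/-- Deleting at most `t` positions from the periodic marker sequence
`x_i = (i-1) mod (t+1)` determines the deleted position set uniquely. -/
theorem marker_deletion_unique (t n : ℕ) (S S' : Finset ℕ)
    (hS : S ⊆ Finset.range n) (hS' : S' ⊆ Finset.range n)
    (hcS : S.card ≤ t) (hcS' : S'.card ≤ t)
    (h : ((List.range n).filter (fun i => i ∉ S)).map (fun i => i % (t + 1))
        = ((List.range n).filter (fun i => i ∉ S')).map (fun i => i % (t + 1))) :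
    S = S' := by
  by_contra hne
  have hD : ((S \ S') ∪ (S' \ S)).Nonempty := by
    rw [Finset.nonempty_iff_ne_empty]
    intro he
    apply hne
    ext a
    constructor <;> intro ha <;> by_contra hb
    · exact Finset.notMem_empty a (he ▸ Finset.mem_union_left _ (Finset.mem_sdiff.mpr ⟨ha, hb⟩))
    · exact Finset.notMem_empty a (he ▸ Finset.mem_union_right _ (Finset.mem_sdiff.mpr ⟨ha, hb⟩))
  set m := ((S \ S') ∪ (S' \ S)).min' hD with hm
  have hmmem := Finset.min'_mem _ hD
  have hmin : ∀ k, k < m → (k ∈ S ↔ k ∈ S') := by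
    intro k hk
    by_contra hiff
    have hkD : k ∈ (S \ S') ∪ (S' \ S) := by
      rw [Finset.mem_union, Finset.mem_sdiff, Finset.mem_sdiff]
      tauto
    have := Finset.min'_le _ _ hkD
    omega
  rw [← hm] at hmmem
  rcases Finset.mem_union.mp hmmem with hc | hc
  · rw [Finset.mem_sdiff] at hc
    exact (marker_aux t n S S' hS hcS h m hc.1 hc.2 hmin).elim
  · rw [Finset.mem_sdiff] at hc
    exact (marker_aux t n S' S hS' hcS' h.symm m hc.1 hc.2 (fun k hk => (hmin k hk).symm)).elim
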